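/- Fix an integer k ≥ 1 and define g_k(x) = x·f_{k−1}(x)/f_k(x) for x > 0. Then for every x > 0 the derivative of g_k at x is strictly positive; in particular, g_k is strictly increasing on (0, ∞). -/

import Mathlib

/-- `fPo k μ = e^{-μ} ∑_{i ≥ k} μ^i / i!`, the probability that a Poisson random
variable with mean `μ` is at least `k`. -/
noncomputable def fPo (k : ℕ) (μ : ℝ) : ℝ :=
  Real.exp (-μ) * ∑' i : ℕ, μ ^ (k + i) / (Nat.factorial (k + i) : ℝ)

/-- `gPo k x = x * f_{k-1}(x) / f_k(x)`. -/
noncomputable def gPo (k : ℕ) (x : ℝ) : ℝ := x * fPo (k - 1) x / fPo k x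


open Finset

noncomputable def qPo (k : ℕ) (x : ℝ) : ℝ := x ^ k / (Nat.factorial k : ℝ)

noncomputable def SPo (k : ℕ) (x : ℝ) : ℝ := Real.exp x - ∑ j ∈ Finset.range k, qPo j x

lemma summable_qPo (x : ℝ) : Summable (fun n => qPo n x) := Real.summable_pow_div_factorial x

lemma summable_qPo_add (c : ℕ) (x : ℝ) : Summable (fun n => qPo (c + n) x) :=
  ((summable_nat_add_iff c).2 (summable_qPo x)).congr (fun n => by rw [add_comm])

lemma exp_eq_tsum_qPo (x : ℝ) : Real.exp x = ∑' n, qPo n x := by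
  rw [Real.exp_eq_exp_ℝ, NormedSpace.exp_eq_tsum_div]
  simp [qPo]

lemma SPo_eq_tsum (k : ℕ) (x : ℝ) : SPo k x = ∑' i, qPo (k + i) x := by
  have h := Summable.sum_add_tsum_nat_add (f := fun n => qPo n x) k (summable_qPo x)
  have h2 : (∑' i, qPo (i + k) x) = ∑' i, qPo (k + i) x :=
    tsum_congr fun i => by rw [add_comm]
  rw [SPo, exp_eq_tsum_qPo, ← h, h2]; ring

lemma qPo_nonneg {x : ℝ} (hx : 0 ≤ x) (k : ℕ) : 0 ≤ qPo k x := by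
  unfold qPo; positivity

lemma qPo_pos {x : ℝ} (hx : 0 < x) (k : ℕ) : 0 < qPo k x := by
  unfold qPo; positivity

lemma SPo_pos (k : ℕ) {x : ℝ} (hx : 0 < x) : 0 < SPo k x := by
  rw [SPo_eq_tsum]
  exact Summable.tsum_pos (summable_qPo_add k x) (fun i => qPo_nonneg hx.le _) 0 (qPo_pos hx _)

lemma fPo_eq (k : ℕ) (x : ℝ) : fPo k x = Real.exp (-x) * SPo k x := by
  rw [fPo, SPo_eq_tsum]; simp [qPo]

lemma gPo_eq (k : ℕ) (x : ℝ) : gPo k x = x * SPo (k - 1) x / SPo k x := by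
  rw [gPo, fPo_eq, fPo_eq,
    show x * (Real.exp (-x) * SPo (k - 1) x) = Real.exp (-x) * (x * SPo (k - 1) x) by ring,
    mul_div_mul_left _ _ (Real.exp_ne_zero (-x))]
lemma factorial_ineq (k i j : ℕ) :
    (k+i).factorial * (k+j).factorial ≤ k.factorial * (k+i+j).factorial := by
  have h1 : (k+i).choose i * k.factorial * i.factorial = (k+i).factorial :=
    Nat.add_choose_mul_factorial_mul_factorial k i
  have h2 : (k+i+j).choose i * i.factorial * (k+j).factorial = (k+i+j).factorial := by
    have := Nat.choose_mul_factorial_mul_factorial (n := k+i+j) (k := i) (by omega)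
    simpa [show k+i+j-i = k+j by omega] using this
  have h3 : (k+i).choose i ≤ (k+i+j).choose i := Nat.choose_le_choose i (by omega)
  calc (k+i).factorial * (k+j).factorial
      = (k+i).choose i * k.factorial * i.factorial * (k+j).factorial := by rw [h1]
    _ ≤ (k+i+j).choose i * k.factorial * i.factorial * (k+j).factorial := by
        exact Nat.mul_le_mul_right _ (Nat.mul_le_mul_right _ (Nat.mul_le_mul_right _ h3))
    _ = k.factorial * ((k+i+j).choose i * i.factorial * (k+j).factorial) := by ring
    _ = k.factorial * (k+i+j).factorial := by rw [h2]

lemma qPo_mul_le {x : ℝ} (hx : 0 ≤ x) (k i j : ℕ) :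
    qPo k x * qPo (k+i+j) x ≤ qPo (k+i) x * qPo (k+j) x := by
  simp only [qPo, div_mul_div_comm, ← pow_add]
  rw [show k + (k+i+j) = (k+i) + (k+j) by ring]
  refine div_le_div_of_nonneg_left (pow_nonneg hx _) (by positivity) ?_
  exact_mod_cast factorial_ineq k i j

lemma summable_mul_qPo (m : ℕ) {x : ℝ} (hx : 0 < x) :
    Summable (fun n : ℕ => ((n:ℝ)+1) * qPo (m+1+n) x) := by
  refine Summable.of_nonneg_of_le
    (fun n => mul_nonneg (by positivity) (qPo_nonneg hx.le _))
    (fun n => ?_) ((summable_qPo_add m x).mul_left x)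
  simp only [qPo]
  rw [show m+1+n = (m+n)+1 by ring, Nat.factorial_succ, pow_succ]
  have hf : 0 < ((m+n).factorial : ℝ) := by exact_mod_cast (m+n).factorial_pos
  have hp : 0 < x ^ (m+n) := pow_pos hx _
  rw [show ((n:ℝ) + 1) * (x ^ (m+n) * x / ((((m + n + 1) * (m + n).factorial : ℕ)):ℝ))
      = ((n:ℝ) + 1) * (x ^ (m+n) * x) / ((((m + n + 1) * (m + n).factorial : ℕ)):ℝ) by ring]
  rw [← mul_div_assoc x, div_le_div_iff₀ (by positivity) (by positivity)]
  push_cast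
  nlinarith [mul_pos hp hx, mul_pos (mul_pos hp hx) hf]

lemma cauchy_bound (K : ℕ) {x : ℝ} (hx : 0 < x) (hK : 1 ≤ K) :
    (∑' n : ℕ, ((n:ℝ)+1) * (qPo K x * qPo (K+n) x)) ≤ SPo K x ^ 2 := by
  have hs : Summable (fun n : ℕ => ‖qPo (K+n) x‖) :=
    (summable_qPo_add K x).abs.congr (fun n => (Real.norm_eq_abs _).symm)
  have hcp := tsum_mul_tsum_eq_tsum_sum_range_of_summable_norm hs hs
  rw [SPo_eq_tsum, sq, hcp]
  obtain ⟨m, rfl⟩ := Nat.exists_eq_add_of_le hK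
  have hsum1 : Summable (fun n : ℕ => ((n:ℝ)+1) * (qPo (1+m) x * qPo (1+m+n) x)) := by
    refine ((summable_mul_qPo m hx).mul_left (qPo (1+m) x)).congr (fun n => ?_)
    rw [show m+1+n = 1+m+n by ring]; ring
  have hle : ∀ n : ℕ, ((n:ℝ)+1) * (qPo (1+m) x * qPo (1+m+n) x)
      ≤ ∑ i ∈ Finset.range (n+1), qPo (1+m+i) x * qPo (1+m+(n-i)) x := by
    intro n
    have hterm : ∀ i ∈ Finset.range (n+1),
        qPo (1+m) x * qPo (1+m+n) x ≤ qPo (1+m+i) x * qPo (1+m+(n-i)) x := by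
      intro i hi
      have hi' : i ≤ n := Nat.lt_succ_iff.mp (Finset.mem_range.mp hi)
      have := qPo_mul_le hx.le (1+m) i (n-i)
      simpa [show 1+m+i+(n-i) = 1+m+n by omega] using this
    calc ((n:ℝ)+1) * (qPo (1+m) x * qPo (1+m+n) x)
        = ∑ _i ∈ Finset.range (n+1), qPo (1+m) x * qPo (1+m+n) x := by
          rw [Finset.sum_const, Finset.card_range, nsmul_eq_mul]; push_cast; ring
      _ ≤ _ := Finset.sum_le_sum hterm
  have hsum2 : Summable (fun n : ℕ =>
      ∑ i ∈ Finset.range (n+1), qPo (1+m+i) x * qPo (1+m+(n-i)) x) :=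
    (summable_norm_sum_mul_range_of_summable_norm hs hs).of_norm
  exact Summable.tsum_le_tsum hle hsum1 hsum2
lemma SPo_step (j : ℕ) (x : ℝ) : SPo j x = qPo j x + SPo (j+1) x := by
  simp [SPo, Finset.sum_range_succ]; ring

lemma term_id (m j : ℕ) {x : ℝ} (hx : 0 < x) :
    qPo (m+2) x * qPo (m+2+j) x - qPo (m+1) x * qPo (m+3+j) x
      = (((j:ℝ)+1)/((m:ℝ)+(j:ℝ)+3)) * (qPo (m+2) x * qPo (m+2+j) x) := by
  simp only [qPo]
  have h2 : ((m+2).factorial : ℝ) = ((m:ℝ)+2) * ((m+1).factorial : ℝ) := by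
    rw [show m+2 = (m+1)+1 by ring, Nat.factorial_succ]; push_cast; ring
  have h3 : ((m+3+j).factorial : ℝ) = ((m:ℝ)+(j:ℝ)+3) * ((m+2+j).factorial : ℝ) := by
    rw [show m+3+j = (m+2+j)+1 by ring, Nat.factorial_succ]; push_cast; ring
  have hx1 : x ^ (m+3+j) = x * x ^ (m+2+j) := by
    rw [show m+3+j = (m+2+j)+1 by ring, pow_succ]; ring
  have hx2 : x ^ (m+2) = x * x ^ (m+1) := by rw [pow_succ]; ring
  have hf1 : ((m+1).factorial : ℝ) ≠ 0 := by positivity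
  have hf2 : ((m+2+j).factorial : ℝ) ≠ 0 := by positivity
  have hm : ((m:ℝ)+2) ≠ 0 := by positivity
  have hmj : ((m:ℝ)+(j:ℝ)+3) ≠ 0 := by positivity
  rw [h2, h3, hx1, hx2]
  field_simp
  ring

lemma core_ineq (m : ℕ) {x : ℝ} (hx : 0 < x) :
    ((m:ℝ)+2) * (qPo (m+2) x * SPo (m+2) x - qPo (m+1) x * SPo (m+3) x)
      < SPo (m+2) x ^ 2 := by
  set q2 := qPo (m+2) x with hq2
  set q1 := qPo (m+1) x with hq1
  have hS2 : q2 * SPo (m+2) x = ∑' j : ℕ, q2 * qPo (m+2+j) x := by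
    rw [SPo_eq_tsum, tsum_mul_left]
  have hS3 : q1 * SPo (m+3) x = ∑' j : ℕ, q1 * qPo (m+3+j) x := by
    rw [SPo_eq_tsum, tsum_mul_left]
  have hsum2 : Summable (fun j : ℕ => q2 * qPo (m+2+j) x) :=
    (summable_qPo_add (m+2) x).mul_left q2
  have hsum3 : Summable (fun j : ℕ => q1 * qPo (m+3+j) x) :=
    (summable_qPo_add (m+3) x).mul_left q1
  have hdiff : q2 * SPo (m+2) x - q1 * SPo (m+3) x
      = ∑' j : ℕ, (q2 * qPo (m+2+j) x - q1 * qPo (m+3+j) x) := by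
    rw [hS2, hS3, ← Summable.tsum_sub hsum2 hsum3]
  have hFg : ∀ j : ℕ, ((m:ℝ)+2) * (q2 * qPo (m+2+j) x - q1 * qPo (m+3+j) x)
      ≤ (((m:ℝ)+2)/((m:ℝ)+3)) * (((j:ℝ)+1) * (q2 * qPo (m+2+j) x)) := by
    intro j
    rw [term_id m j hx]
    have hq : 0 ≤ q2 * qPo (m+2+j) x :=
      mul_nonneg (qPo_nonneg hx.le _) (qPo_nonneg hx.le _)
    rw [show ((m:ℝ)+2) * ((((j:ℝ)+1)/((m:ℝ)+(j:ℝ)+3)) * (q2 * qPo (m+2+j) x))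
        = (((m:ℝ)+2)/((m:ℝ)+(j:ℝ)+3)) * (((j:ℝ)+1) * (q2 * qPo (m+2+j) x)) by ring]
    have h1 : ((m:ℝ)+2)/((m:ℝ)+(j:ℝ)+3) ≤ ((m:ℝ)+2)/((m:ℝ)+3) := by
      apply div_le_div_of_nonneg_left (by positivity) (by positivity)
      have : (0:ℝ) ≤ j := Nat.cast_nonneg j
      linarith
    exact mul_le_mul_of_nonneg_right h1 (by positivity)
  have hsumF : Summable (fun j : ℕ => ((m:ℝ)+2) * (q2 * qPo (m+2+j) x - q1 * qPo (m+3+j) x)) :=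
    ((hsum2.sub hsum3).mul_left _)
  have hsumG : Summable (fun j : ℕ =>
      (((m:ℝ)+2)/((m:ℝ)+3)) * (((j:ℝ)+1) * (q2 * qPo (m+2+j) x))) := by
    have h0 : Summable (fun j : ℕ => ((j:ℝ)+1) * qPo (m+1+1+j) x) := summable_mul_qPo (m+1) hx
    refine ((h0.mul_left q2).mul_left (((m:ℝ)+2)/((m:ℝ)+3))).congr (fun j => ?_)
    rw [show m+1+1+j = m+2+j by ring]; ring
  have step1 : ((m:ℝ)+2) * (q2 * SPo (m+2) x - q1 * SPo (m+3) x)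
      ≤ (((m:ℝ)+2)/((m:ℝ)+3)) * ∑' j : ℕ, (((j:ℝ)+1) * (q2 * qPo (m+2+j) x)) := by
    rw [hdiff, ← tsum_mul_left (a := ((m:ℝ)+2)), ← tsum_mul_left]
    exact Summable.tsum_le_tsum hFg hsumF hsumG
  have step2 : (∑' j : ℕ, (((j:ℝ)+1) * (q2 * qPo (m+2+j) x))) ≤ SPo (m+2) x ^ 2 := by
    have := cauchy_bound (m+2) hx (by omega)
    exact this
  have hS2pos : 0 < SPo (m+2) x ^ 2 := by
    have := SPo_pos (m+2) hx; positivity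
  have hfrac : (((m:ℝ)+2)/((m:ℝ)+3)) < 1 := by
    rw [div_lt_one (by positivity)]; linarith
  have hnn : 0 ≤ ∑' j : ℕ, (((j:ℝ)+1) * (q2 * qPo (m+2+j) x)) := by
    apply tsum_nonneg
    intro j
    have := qPo_nonneg hx.le (m+2+j)
    have := qPo_nonneg hx.le (m+2)
    positivity
  calc ((m:ℝ)+2) * (q2 * SPo (m+2) x - q1 * SPo (m+3) x)
      ≤ (((m:ℝ)+2)/((m:ℝ)+3)) * ∑' j : ℕ, (((j:ℝ)+1) * (q2 * qPo (m+2+j) x)) := step1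
    _ ≤ (((m:ℝ)+2)/((m:ℝ)+3)) * SPo (m+2) x ^ 2 := by
        exact mul_le_mul_of_nonneg_left step2 (by positivity)
    _ < SPo (m+2) x ^ 2 := by nlinarith
lemma xq_step (j : ℕ) (x : ℝ) : x * qPo j x = ((j:ℝ)+1) * qPo (j+1) x := by
  simp only [qPo, Nat.factorial_succ, pow_succ]
  have hf : ((j.factorial : ℝ)) ≠ 0 := by positivity
  have hj : ((j:ℝ)+1) ≠ 0 := by positivity
  push_cast
  field_simp

lemma key_ineq (m : ℕ) {x : ℝ} (hx : 0 < x) :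
    x * SPo (m+1) x ^ 2 < (SPo (m+1) x + x * SPo m x) * SPo (m+2) x := by
  have e1 : SPo (m+1) x = qPo (m+1) x + SPo (m+2) x := SPo_step (m+1) x
  have e0 : SPo m x = qPo m x + SPo (m+1) x := SPo_step m x
  have eA : SPo (m+2) x = qPo (m+2) x + SPo (m+3) x := SPo_step (m+2) x
  have hq0 : x * qPo m x = ((m:ℝ)+1) * qPo (m+1) x := xq_step m x
  have hq1 : x * qPo (m+1) x = ((m:ℝ)+2) * qPo (m+2) x := by
    have := xq_step (m+1) x; push_cast at this ⊢; convert this using 2 <;> push_cast <;> ring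
  have hcore := core_ineq m hx
  have hid : (SPo (m+1) x + x * SPo m x) * SPo (m+2) x - x * SPo (m+1) x ^ 2
      = SPo (m+2) x ^ 2 + ((m:ℝ)+2) * qPo (m+1) x * SPo (m+3) x
        - ((m:ℝ)+2) * qPo (m+2) x * SPo (m+2) x := by
    linear_combination (x * SPo (m+2) x) * e0 + SPo (m+2) x * hq0
      + (- x * SPo (m+1) x) * e1 + (- SPo (m+1) x) * hq1
      + (- ((m:ℝ)+2) * qPo (m+2) x) * e1 + SPo (m+2) x * e1
      + (((m:ℝ)+2) * qPo (m+1) x) * eA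
  linarith [hcore, hid]
lemma key_ineq_one {x : ℝ} (hx : 0 < x) :
    x * SPo 0 x ^ 2 < (SPo 0 x + x * SPo 0 x) * SPo 1 x := by
  have h0 : SPo 0 x = Real.exp x := by simp [SPo]
  have h1 : SPo 1 x = Real.exp x - 1 := by simp [SPo, qPo]
  rw [h0, h1]
  nlinarith [mul_pos (Real.exp_pos x) (sub_pos.mpr (Real.add_one_lt_exp hx.ne')),
    Real.exp_pos x]

lemma hasDerivAt_sum_q (k : ℕ) (x : ℝ) :
    HasDerivAt (fun y => ∑ j ∈ Finset.range (k+1), qPo j y)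
      (∑ j ∈ Finset.range k, qPo j x) x := by
  induction k with
  | zero =>
      have : HasDerivAt (fun _ : ℝ => (1:ℝ)) 0 x := hasDerivAt_const x 1
      simpa [qPo] using this
  | succ n ih =>
      have hpow : HasDerivAt (fun y : ℝ => y ^ (n+1)) (((n:ℝ)+1) * x ^ n) x := by
        simpa using hasDerivAt_pow (n+1) x
      have h : HasDerivAt (fun y => qPo (n+1) y) (qPo n x) x := by
        have := hpow.div_const (((n+1).factorial : ℝ))
        have heq : ((n:ℝ)+1) * x ^ n / ((n+1).factorial : ℝ) = qPo n x := by
          rw [Nat.factorial_succ, qPo]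
          have hf : ((n.factorial : ℝ)) ≠ 0 := by positivity
          push_cast
          field_simp
        simpa [qPo, heq] using this
      simpa [Finset.sum_range_succ, Pi.add_def] using ih.add h

lemma hasDerivAt_SPo (k : ℕ) (x : ℝ) : HasDerivAt (SPo k) (SPo (k-1) x) x := by
  cases k with
  | zero =>
      have hfun : SPo 0 = Real.exp := funext fun y => by simp [SPo]
      show HasDerivAt (SPo 0) (SPo 0 x) x
      rw [hfun]
      exact Real.hasDerivAt_exp x
  | succ m =>
      have h := (Real.hasDerivAt_exp x).sub (hasDerivAt_sum_q m x)
      have hfun : SPo (m+1) = fun y => Real.exp y - ∑ j ∈ Finset.range (m+1), qPo j y :=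
        funext fun y => by simp [SPo]
      show HasDerivAt (SPo (m+1)) (SPo m x) x
      rw [hfun]
      have hval : SPo m x = Real.exp x - ∑ j ∈ Finset.range m, qPo j x := rfl
      rw [hval]
      exact h

lemma gPo_hasDerivAt (k : ℕ) (hk : 1 ≤ k) {x : ℝ} (hx : 0 < x) :
    ∃ d : ℝ, HasDerivAt (gPo k) d x ∧ 0 < d := by
  have hSk : 0 < SPo k x := SPo_pos k hx
  have hu : HasDerivAt (fun y => y * SPo (k-1) y)
      (1 * SPo (k-1) x + x * SPo (k-1-1) x) x :=
    (hasDerivAt_id x).mul (hasDerivAt_SPo (k-1) x)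
  have hv := hasDerivAt_SPo k x
  have hg : HasDerivAt (fun y => y * SPo (k-1) y / SPo k y)
      (((1 * SPo (k-1) x + x * SPo (k-1-1) x) * SPo k x
        - x * SPo (k-1) x * SPo (k-1) x) / SPo k x ^ 2) x := hu.div hv hSk.ne'
  refine ⟨((1 * SPo (k-1) x + x * SPo (k-1-1) x) * SPo k x
      - x * SPo (k-1) x * SPo (k-1) x) / SPo k x ^ 2, ?_, ?_⟩
  · have hfun : gPo k = fun y => y * SPo (k-1) y / SPo k y := funext (gPo_eq k)
    rw [hfun]
    exact hg
  · apply div_pos ?_ (by positivity)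
    match k, hk with
    | 1, _ =>
        have := key_ineq_one hx
        norm_num
        linarith
    | (m+2), _ =>
        have := key_ineq m hx
        have h1 : m + 2 - 1 = m + 1 := by omega
        have h2 : m + 1 - 1 = m := by omega
        rw [h1, h2]
        linarith

theorem stmt0 (k : ℕ) (hk : 1 ≤ k) :
    (∀ x : ℝ, 0 < x → ∃ d : ℝ, HasDerivAt (gPo k) d x ∧ 0 < d) ∧
      StrictMonoOn (gPo k) (Set.Ioi (0 : ℝ)) := by
  refine ⟨fun x hx => gPo_hasDerivAt k hk hx, ?_⟩
  apply strictMonoOn_of_deriv_pos (convex_Ioi 0)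
  · intro y hy
    obtain ⟨d, hd, _⟩ := gPo_hasDerivAt k hk (Set.mem_Ioi.mp hy)
    exact hd.differentiableAt.continuousAt.continuousWithinAt
  · intro y hy
    rw [interior_Ioi] at hy
    obtain ⟨d, hd, hdpos⟩ := gPo_hasDerivAt k hk (Set.mem_Ioi.mp hy)
    rwa [hd.deriv]
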